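/- For fixed x_a > 0, the map x_b ↦ (x_b·tanh(x_b) - x_a·tanh(x_a))/(tanh²(x_b) - tanh²(x_a)) is strictly increasing in x_b for x_b > x_a. -/

import Mathlib

open Real

noncomputable def myAtanh (t : ℝ) : ℝ := (Real.log (1 + t) - Real.log (1 - t)) / 2

lemma myAtanh_zero : myAtanh 0 = 0 := by simp [myAtanh]

lemma tanh_eq (x : ℝ) : Real.tanh x = Real.sinh x / Real.cosh x :=
  Real.tanh_eq_sinh_div_cosh x

lemma one_add_tanh (x : ℝ) : 1 + Real.tanh x = Real.exp x / Real.cosh x := by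
  rw [_root_.tanh_eq, ← Real.cosh_add_sinh]
  field_simp [(Real.cosh_pos x).ne']

lemma one_sub_tanh (x : ℝ) : 1 - Real.tanh x = Real.exp (-x) / Real.cosh x := by
  rw [_root_.tanh_eq, ← Real.cosh_sub_sinh]
  field_simp [(Real.cosh_pos x).ne']

lemma tanh_lt_one (x : ℝ) : Real.tanh x < 1 := by
  have h := one_sub_tanh x
  nlinarith [Real.exp_pos (-x), Real.cosh_pos x,
    div_pos (Real.exp_pos (-x)) (Real.cosh_pos x)]

lemma neg_one_lt_tanh (x : ℝ) : -1 < Real.tanh x := by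
  have h := one_add_tanh x
  nlinarith [div_pos (Real.exp_pos x) (Real.cosh_pos x)]

lemma myAtanh_tanh (x : ℝ) : myAtanh (Real.tanh x) = x := by
  rw [myAtanh, one_add_tanh, one_sub_tanh,
    Real.log_div (Real.exp_ne_zero x) (Real.cosh_pos x).ne',
    Real.log_div (Real.exp_ne_zero (-x)) (Real.cosh_pos x).ne',
    Real.log_exp, Real.log_exp]
  ring

lemma hasDerivAt_tanh (x : ℝ) : HasDerivAt Real.tanh (1 / Real.cosh x ^ 2) x := by
  have h := (Real.hasDerivAt_sinh x).div (Real.hasDerivAt_cosh x) (Real.cosh_pos x).ne'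
  have h2 : Real.cosh x * Real.cosh x - Real.sinh x * Real.sinh x = 1 := by
    nlinarith [Real.cosh_sq_sub_sinh_sq x]
  rw [h2] at h
  have : Real.tanh = fun y => Real.sinh y / Real.cosh y := funext tanh_eq
  rw [this]
  exact h

lemma tanh_strictMono : StrictMono Real.tanh :=
  strictMono_of_deriv_pos fun x => by
    rw [(hasDerivAt_tanh x).deriv]
    positivity

lemma tanh_pos {x : ℝ} (hx : 0 < x) : 0 < Real.tanh x := by
  have := tanh_strictMono hx
  rwa [Real.tanh_zero] at this

lemma hasDerivAt_myAtanh {t : ℝ} (h1 : -1 < t) (h2 : t < 1) :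
    HasDerivAt myAtanh (1 / (1 - t ^ 2)) t := by
  have ha : HasDerivAt (fun y : ℝ => Real.log (1 + y)) (1 / (1 + t)) t := by
    have := ((hasDerivAt_id t).const_add 1).log (by simp only [id_eq]; exact (by linarith : (0:ℝ) < 1 + t).ne')
    simpa using this
  have hb : HasDerivAt (fun y : ℝ => Real.log (1 - y)) (-1 / (1 - t)) t := by
    have := ((hasDerivAt_id t).const_sub 1).log (by simp only [id_eq]; exact (by linarith : (0:ℝ) < 1 - t).ne')
    simpa using this
  have h := (ha.sub hb).div_const 2
  have he : (1 / (1 + t) - -1 / (1 - t)) / 2 = 1 / (1 - t ^ 2) := by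
    have h1' : 1 + t ≠ 0 := by linarith
    have h2' : 1 - t ≠ 0 := by linarith
    have h3' : 1 - t ^ 2 ≠ 0 := by nlinarith
    field_simp [h1', h2', h3']
    ring
  rw [he] at h
  exact h

lemma convexOn_myAtanh : StrictConvexOn ℝ (Set.Ico (0:ℝ) 1) myAtanh := by
  apply StrictMonoOn.strictConvexOn_of_deriv (convex_Ico 0 1)
  · intro y hy
    exact ((hasDerivAt_myAtanh (by linarith [hy.1]) hy.2).continuousAt).continuousWithinAt
  · rw [interior_Ico]
    intro u hu v hv huv
    rw [(hasDerivAt_myAtanh (by linarith [hu.1]) hu.2).deriv,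
      (hasDerivAt_myAtanh (by linarith [hv.1]) hv.2).deriv]
    apply one_div_lt_one_div_of_lt
    · nlinarith [hv.1, hv.2]
    · nlinarith [hu.1, hv.1]

/-- slope of myAtanh from 0 is monotone -/
lemma myAtanh_div_mono {s t : ℝ} (hs : 0 < s) (hst : s ≤ t) (ht : t < 1) :
    myAtanh s / s ≤ myAtanh t / t := by
  have := convexOn_myAtanh.convexOn.secant_mono (a := 0)
    (x := s) (y := t)
    ⟨le_refl 0, one_pos⟩ ⟨hs.le, lt_of_le_of_lt hst ht⟩ ⟨by linarith, ht⟩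
    hs.ne' (lt_of_lt_of_le hs hst).ne' hst
  simpa [myAtanh_zero] using this

noncomputable def G (w : ℝ) : ℝ := Real.sqrt w * myAtanh (Real.sqrt w)

noncomputable def G' (w : ℝ) : ℝ :=
  myAtanh (Real.sqrt w) / (2 * Real.sqrt w) + 1 / (2 * (1 - w))

lemma hasDerivAt_G {w : ℝ} (h0 : 0 < w) (h1 : w < 1) : HasDerivAt G (G' w) w := by
  have hsp : 0 < Real.sqrt w := Real.sqrt_pos.2 h0
  have hs1 : Real.sqrt w < 1 := by
    rw [show (1:ℝ) = Real.sqrt 1 by simp]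
    exact Real.sqrt_lt_sqrt h0.le h1
  have hs : HasDerivAt Real.sqrt (1 / (2 * Real.sqrt w)) w := Real.hasDerivAt_sqrt h0.ne'
  have ha : HasDerivAt myAtanh (1 / (1 - (Real.sqrt w) ^ 2)) (Real.sqrt w) :=
    hasDerivAt_myAtanh (by linarith) hs1
  have hc : HasDerivAt (fun y => myAtanh (Real.sqrt y))
      (1 / (1 - (Real.sqrt w) ^ 2) * (1 / (2 * Real.sqrt w))) w := ha.comp w hs
  have hg := hs.mul hc
  have hsq : (Real.sqrt w) ^ 2 = w := Real.sq_sqrt h0.le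
  have he : 1 / (2 * Real.sqrt w) * myAtanh (Real.sqrt w)
      + Real.sqrt w * (1 / (1 - (Real.sqrt w) ^ 2) * (1 / (2 * Real.sqrt w))) = G' w := by
    rw [hsq, G']
    have hw1 : 1 - w ≠ 0 := by linarith
    field_simp
  rw [he] at hg
  exact hg

lemma strictMonoOn_G' : StrictMonoOn G' (Set.Ioo (0:ℝ) 1) := by
  intro u hu v hv huv
  have hsu : 0 < Real.sqrt u := Real.sqrt_pos.2 hu.1
  have hsv1 : Real.sqrt v < 1 := by
    rw [show (1:ℝ) = Real.sqrt 1 by simp]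
    exact Real.sqrt_lt_sqrt hv.1.le hv.2
  have hst : Real.sqrt u ≤ Real.sqrt v := Real.sqrt_le_sqrt huv.le
  have h1 : myAtanh (Real.sqrt u) / (2 * Real.sqrt u)
      ≤ myAtanh (Real.sqrt v) / (2 * Real.sqrt v) := by
    have := myAtanh_div_mono hsu hst hsv1
    have hsv : 0 < Real.sqrt v := lt_of_lt_of_le hsu hst
    rw [div_le_div_iff₀ (by positivity) (by positivity)]
    rw [div_le_div_iff₀ hsu hsv] at this
    nlinarith
  have h2 : 1 / (2 * (1 - u)) < 1 / (2 * (1 - v)) := by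
    apply one_div_lt_one_div_of_lt
    · nlinarith [hv.2]
    · nlinarith
  unfold G'
  linarith

lemma strictConvexOn_G : StrictConvexOn ℝ (Set.Ioo (0:ℝ) 1) G := by
  apply StrictMonoOn.strictConvexOn_of_deriv (convex_Ioo 0 1)
  · intro y hy
    exact ((hasDerivAt_G hy.1 hy.2).continuousAt).continuousWithinAt
  · rw [interior_Ioo]
    intro u hu v hv huv
    rw [(hasDerivAt_G hu.1 hu.2).deriv, (hasDerivAt_G hv.1 hv.2).deriv]
    exact strictMonoOn_G' hu hv huv

lemma G_tanh_sq {x : ℝ} (hx : 0 < x) : G (Real.tanh x ^ 2) = x * Real.tanh x := by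
  have ht : 0 < Real.tanh x := tanh_pos hx
  rw [G, Real.sqrt_sq ht.le, myAtanh_tanh]
  ring

/-- For fixed `x_a > 0`, the map
`x_b ↦ (x_b tanh x_b - x_a tanh x_a) / (tanh² x_b - tanh² x_a)`
is strictly increasing in `x_b` on `(x_a, ∞)`. -/
theorem tanh_difference_quotient_strictMonoOn (xa : ℝ) (hxa : 0 < xa) :
    StrictMonoOn
      (fun xb : ℝ =>
        (xb * Real.tanh xb - xa * Real.tanh xa)
          / (Real.tanh xb ^ 2 - Real.tanh xa ^ 2))
      (Set.Ioi xa) := by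
  intro b hb c hc hbc
  simp only [Set.mem_Ioi] at hb hc
  have hb0 : 0 < b := hxa.trans hb
  have hc0 : 0 < c := hxa.trans hc
  have hta : 0 < Real.tanh xa := tanh_pos hxa
  have htb : 0 < Real.tanh b := tanh_pos hb0
  have htc : 0 < Real.tanh c := tanh_pos hc0
  have hab : Real.tanh xa < Real.tanh b := tanh_strictMono hb
  have hbc' : Real.tanh b < Real.tanh c := tanh_strictMono hbc
  have hwa : Real.tanh xa ^ 2 ∈ Set.Ioo (0:ℝ) 1 :=
    ⟨by positivity, by nlinarith [_root_.tanh_lt_one xa]⟩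
  have hwb : Real.tanh b ^ 2 ∈ Set.Ioo (0:ℝ) 1 :=
    ⟨by positivity, by nlinarith [_root_.tanh_lt_one b]⟩
  have hwc : Real.tanh c ^ 2 ∈ Set.Ioo (0:ℝ) 1 :=
    ⟨by positivity, by nlinarith [_root_.tanh_lt_one c]⟩
  have hwab : Real.tanh xa ^ 2 < Real.tanh b ^ 2 := by nlinarith
  have hwbc : Real.tanh b ^ 2 < Real.tanh c ^ 2 := by nlinarith
  have key := strictConvexOn_G.secant_strict_mono hwa hwb hwc hwab.ne' (hwab.trans hwbc).ne' hwbc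
  rw [G_tanh_sq hxa, G_tanh_sq hb0, G_tanh_sq hc0] at key
  simpa using key
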